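/- For every integer m ≥ 1, the formal power series J_m satisfies (1 + t) · J_m = (1 + t) · J_{m−1} + t · (1 + H_{m−1}) · J_m in ℤ⟦t⟧. -/

import Mathlib

/-- `H m` is the formal power series in `ℤ⟦t⟧` whose coefficient of `t^n` (for
`n ≥ 1`) is the number of words `w₁ ⋯ wₙ` with letters in `{1, …, m}` satisfying
`w_{i+1} ≤ w_i + 1` and `w_{i+1} ≠ w_i`, ending with `wₙ = m`; its constant
coefficient is `0`, and `H 0 = 0`. -/
noncomputable def H (m : ℕ) : PowerSeries ℤ :=
  PowerSeries.mk fun n =>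
    (Set.ncard {w : Fin n → ℕ |
      (∀ i, 1 ≤ w i ∧ w i ≤ m) ∧
      (∀ i : ℕ, ∀ h : i + 1 < n,
        w ⟨i + 1, h⟩ ≤ w ⟨i, by omega⟩ + 1 ∧ w ⟨i + 1, h⟩ ≠ w ⟨i, by omega⟩) ∧
      ∃ h : 0 < n, w ⟨n - 1, by omega⟩ = m} : ℤ)

/-- `J m` is the formal power series in `ℤ⟦t⟧` whose coefficient of `t^n` (for
`n ≥ 0`) is the number of (possibly empty) words `w₁ ⋯ wₙ` with letters in
`{1, …, m}` satisfying `w_{i+1} ≤ w_i + 1` and `w_{i+1} ≠ w_i`; `J 0 = 1`. -/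
noncomputable def J (m : ℕ) : PowerSeries ℤ :=
  PowerSeries.mk fun n =>
    (Set.ncard {w : Fin n → ℕ |
      (∀ i, 1 ≤ w i ∧ w i ≤ m) ∧
      ∀ i : ℕ, ∀ h : i + 1 < n,
        w ⟨i + 1, h⟩ ≤ w ⟨i, by omega⟩ + 1 ∧ w ⟨i + 1, h⟩ ≠ w ⟨i, by omega⟩} : ℤ)


section
variable {α β : Type*}

lemma my_ncard_prod (A : Set α) (B : Set β) : (A ×ˢ B).ncard = A.ncard * B.ncard := by
  rw [← Nat.card_coe_set_eq, ← Nat.card_coe_set_eq, ← Nat.card_coe_set_eq,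
    ← Nat.card_prod]
  exact Nat.card_congr (Equiv.Set.prod A B)

lemma my_ncard_biUnion (s : Finset ℕ) (f : ℕ → Set α)
    (hfin : ∀ p ∈ s, (f p).Finite)
    (hdisj : ∀ p ∈ s, ∀ q ∈ s, p ≠ q → Disjoint (f p) (f q)) :
    (⋃ p ∈ s, f p).ncard = ∑ p ∈ s, (f p).ncard := by
  classical
  induction s using Finset.induction with
  | empty => simp
  | @insert a s ha ih =>
    rw [Finset.set_biUnion_insert, Finset.sum_insert ha,
      ← ih (fun p hp => hfin p (Finset.mem_insert_of_mem hp))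
        (fun p hp q hq => hdisj p (Finset.mem_insert_of_mem hp) q (Finset.mem_insert_of_mem hq))]
    refine Set.ncard_union_eq ?_ (hfin a (Finset.mem_insert_self _ _))
      (Set.Finite.biUnion s.finite_toSet fun p hp => hfin p (Finset.mem_insert_of_mem hp))
    rw [Set.disjoint_left]
    intro x hx hx2
    rw [Set.mem_iUnion₂] at hx2
    obtain ⟨p, hp, hxp⟩ := hx2
    exact (hdisj a (Finset.mem_insert_self _ _) p (Finset.mem_insert_of_mem hp)
      (fun h => ha (h ▸ hp))).le_bot ⟨hx, hxp⟩
end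

namespace JRecAux

def Rel (a b : ℕ) : Prop := b ≤ a + 1 ∧ b ≠ a
def JL (m : ℕ) : Set (List ℕ) := {l | (∀ x ∈ l, 1 ≤ x ∧ x ≤ m) ∧ l.Chain' Rel}
def KL (m : ℕ) : Set (List ℕ) := {l | l ∈ JL m ∧ l.head? ≠ some m}
def HB (m : ℕ) : Set (List ℕ) := {l | l ∈ JL m ∧ (l = [] ∨ l.getLast? = some m)}
noncomputable def cnt (S : Set (List ℕ)) (n : ℕ) : ℕ := {l ∈ S | l.length = n}.ncard

lemma cnt_zero {S : Set (List ℕ)} (h : [] ∈ S) : cnt S 0 = 1 := by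
  have : {l ∈ S | l.length = 0} = {([] : List ℕ)} := by
    ext l
    simp only [Set.mem_setOf_eq, Set.mem_singleton_iff, List.length_eq_zero_iff]
    constructor
    · rintro ⟨_, rfl⟩; rfl
    · rintro rfl; exact ⟨h, rfl⟩
  rw [cnt, this, Set.ncard_singleton]

lemma nil_mem_JL (m : ℕ) : [] ∈ JL m := ⟨by simp, List.isChain_nil⟩
lemma nil_mem_KL (m : ℕ) : [] ∈ KL m := ⟨nil_mem_JL m, by simp⟩
lemma nil_mem_HB (m : ℕ) : [] ∈ HB m := ⟨nil_mem_JL m, Or.inl rfl⟩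

-- N1 set decomposition
lemma JL_sec_split (m : ℕ) (hm : 1 ≤ m) (n : ℕ) :
    {l ∈ JL m | l.length = n + 1} =
      {l ∈ KL m | l.length = n + 1} ∪ (List.cons m '' {l ∈ KL m | l.length = n}) := by
  ext l
  constructor
  · rintro ⟨⟨hmem, hch⟩, hlen⟩
    by_cases hh : l.head? = some m
    · right
      obtain ⟨a, t, rfl⟩ : ∃ a t, l = a :: t := by
        cases l with
        | nil => simp at hlen
        | cons a t => exact ⟨a, t, rfl⟩
      simp only [List.head?_cons, Option.some.injEq] at hh
      subst hh
      simp only [List.Chain', List.isChain_cons] at hch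
      refine ⟨t, ⟨⟨⟨fun x hx => hmem x (List.mem_cons_of_mem _ hx), hch.2⟩, ?_⟩, by
        simp only [List.length_cons] at hlen; omega⟩, rfl⟩
      cases ht : t.head? with
      | none => simp
      | some y =>
        have := hch.1 y (by rw [ht]; rfl)
        simpa using this.2
    · exact Or.inl ⟨⟨⟨hmem, hch⟩, hh⟩, hlen⟩
  · rintro (⟨⟨hl, _⟩, hlen⟩ | ⟨t, ⟨⟨⟨hmem, hch⟩, hh⟩, hlen⟩, rfl⟩)
    · exact ⟨hl, hlen⟩
    · refine ⟨⟨?_, ?_⟩, by simpa using hlen⟩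
      · intro x hx
        rcases List.mem_cons.mp hx with rfl | hx
        · exact ⟨hm, le_rfl⟩
        · exact hmem x hx
      · simp only [List.Chain', List.isChain_cons]
        refine ⟨?_, hch⟩
        intro y hy
        cases ht : t.head? with
        | none => rw [ht] at hy; cases hy
        | some z =>
          rw [ht, Option.mem_def, Option.some.injEq] at hy
          subst hy
          have hz : z ∈ t := by
            cases t with
            | nil => simp at ht
            | cons b s => simp only [List.head?_cons, Option.some.injEq] at ht; subst ht; exact List.mem_cons_self
          refine ⟨le_trans (hmem z hz).2 (by omega), fun hzm => hh ?_⟩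
          rw [ht, hzm]



lemma finite_len (m n : ℕ) : {l : List ℕ | (∀ x ∈ l, x ≤ m) ∧ l.length = n}.Finite := by
  have h1 : (Set.univ.pi fun _ : Fin n => Set.Iic m).Finite :=
    Set.Finite.pi fun _ => Set.finite_Iic m
  refine (h1.image List.ofFn).subset ?_
  rintro l ⟨h, hl⟩
  subst hl
  exact ⟨l.get, fun i _ => h _ (l.get_mem _), List.ofFn_get l⟩

lemma KL_sub (m : ℕ) : KL m ⊆ JL m := fun _ h => h.1
lemma HB_sub (m : ℕ) : HB m ⊆ JL m := fun _ h => h.1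

lemma finite_sec {m n : ℕ} {S : Set (List ℕ)} (hS : S ⊆ JL m) :
    {l ∈ S | l.length = n}.Finite := by
  refine (finite_len m n).subset ?_
  rintro l ⟨hl, hlen⟩
  exact ⟨fun x hx => ((hS hl).1 x hx).2, hlen⟩



lemma split_exists {m : ℕ} : ∀ {l : List ℕ}, m ∈ l → ∃ u v, l = u ++ m :: v ∧ m ∉ u := by
  intro l
  induction l with
  | nil => intro h; cases h
  | cons a t ih =>
    intro h
    by_cases ha : a = m
    · exact ⟨[], t, by rw [ha]; rfl, by simp⟩
    · rcases List.mem_cons.mp h with rfl | h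
      · exact absurd rfl ha
      · obtain ⟨u, v, rfl, hu⟩ := ih h
        exact ⟨a :: u, v, rfl, by
          intro hc
          rcases List.mem_cons.mp hc with rfl | hc
          · exact ha rfl
          · exact hu hc⟩

lemma split_unique {m : ℕ} : ∀ {u₁ : List ℕ} {v₁ u₂ v₂ : List ℕ},
    u₁ ++ m :: v₁ = u₂ ++ m :: v₂ → m ∉ u₁ → m ∉ u₂ → u₁ = u₂ ∧ v₁ = v₂ := by
  intro u₁
  induction u₁ with
  | nil =>
    intro v₁ u₂ v₂ h h1 h2
    cases u₂ with
    | nil => simpa using h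
    | cons b s =>
      simp only [List.nil_append, List.cons_append, List.cons.injEq] at h
      exact absurd (h.1 ▸ List.mem_cons_self) h2
  | cons a u ih =>
    intro v₁ u₂ v₂ h h1 h2
    cases u₂ with
    | nil =>
      simp only [List.nil_append, List.cons_append, List.cons.injEq] at h
      exact absurd (h.1 ▸ List.mem_cons_self) h1
    | cons b s =>
      simp only [List.cons_append, List.cons.injEq] at h
      obtain ⟨rfl, h⟩ := h
      obtain ⟨rfl, rfl⟩ := ih h (fun hc => h1 (List.mem_cons_of_mem _ hc))
        (fun hc => h2 (List.mem_cons_of_mem _ hc))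
      exact ⟨rfl, rfl⟩

lemma mem_of_head? {l : List ℕ} {y : ℕ} (h : l.head? = some y) : y ∈ l := by
  cases l with
  | nil => simp at h
  | cons a t =>
    simp only [List.head?_cons, Option.some.injEq] at h
    exact h ▸ List.mem_cons_self

lemma char (M : ℕ) (u v : List ℕ) :
    (u ++ (M + 1) :: v ∈ JL (M + 1) ∧ (M + 1) ∉ u) ↔ (u ∈ HB M ∧ v ∈ KL (M + 1)) := by
  constructor
  · rintro ⟨⟨hmem, hch⟩, hnu⟩
    simp only [List.Chain', List.isChain_append] at hch
    obtain ⟨hcu, hcv, hjunc⟩ := hch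
    rw [List.isChain_cons] at hcv
    have humem : ∀ x ∈ u, 1 ≤ x ∧ x ≤ M := by
      intro x hx
      have h1 := hmem x (List.mem_append_left _ hx)
      have : x ≠ M + 1 := fun hc => hnu (hc ▸ hx)
      exact ⟨h1.1, by omega⟩
    refine ⟨⟨⟨humem, hcu⟩, ?_⟩, ⟨⟨fun x hx => hmem x (List.mem_append_right _ (List.mem_cons_of_mem _ hx)), hcv.2⟩, ?_⟩⟩
    · cases hu : u.getLast? with
      | none => exact Or.inl (by simpa using hu)
      | some x =>
        right
        have hj := hjunc x (by rw [hu]; rfl) (M + 1) rfl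
        have hxM : x ≤ M := (humem x (List.mem_of_mem_getLast? hu)).2
        have : M ≤ x := by have := hj.1; omega
        exact congrArg some (by omega)
    · cases hv : v.head? with
      | none => simp
      | some y =>
        have hj := hcv.1 y (by rw [hv]; rfl)
        simp only [ne_eq, Option.some.injEq]
        exact fun hc => hj.2 (by omega)
  · rintro ⟨⟨⟨humem, hcu⟩, hlast⟩, ⟨⟨hvmem, hcv⟩, hvh⟩⟩
    have hnu : (M + 1) ∉ u := fun hc => by have := (humem _ hc).2; omega
    refine ⟨⟨?_, ?_⟩, hnu⟩
    · intro x hx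
      rcases List.mem_append.mp hx with hx | hx
      · have := humem x hx; omega
      · rcases List.mem_cons.mp hx with rfl | hx
        · omega
        · exact hvmem x hx
    · simp only [List.Chain', List.isChain_append]
      refine ⟨hcu, ?_, ?_⟩
      · rw [List.isChain_cons]
        refine ⟨?_, hcv⟩
        intro y hy
        cases hv : v.head? with
        | none => rw [hv] at hy; cases hy
        | some z =>
          rw [hv, Option.mem_def, Option.some.injEq] at hy
          subst hy
          have hz := hvmem z (mem_of_head? hv)
          refine ⟨by omega, fun hc => hvh (by rw [hv, hc])⟩
      · intro x hx y hy
        rw [Option.mem_def] at hx hy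
        rcases hlast with rfl | hlast
        · simp at hx
        · rw [hlast, Option.some.injEq] at hx
          subst hx
          simp only [List.head?_cons, Option.some.injEq] at hy
          subst hy
          exact ⟨by omega, by omega⟩

lemma HB_notin {M : ℕ} {u : List ℕ} (hu : u ∈ HB M) : (M + 1) ∉ u :=
  fun hc => by have := (hu.1.1 _ hc).2; omega

lemma N2 (M n : ℕ) :
    cnt (JL (M + 1)) (n + 1) = cnt (JL M) (n + 1) +
      ∑ p ∈ Finset.range (n + 1), cnt (HB M) p * cnt (KL (M + 1)) (n - p) := by
  classical
  set G : ℕ → Set (List ℕ) := fun p =>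
    (fun uv : List ℕ × List ℕ => uv.1 ++ (M + 1) :: uv.2) ''
      ({u ∈ HB M | u.length = p} ×ˢ {v ∈ KL (M + 1) | v.length = n - p}) with hG
  have memG : ∀ p ∈ Finset.range (n + 1), ∀ l ∈ G p,
      l ∈ JL (M + 1) ∧ l.length = n + 1 ∧ (M + 1) ∈ l ∧
      ∃ u v, l = u ++ (M + 1) :: v ∧ (M + 1) ∉ u ∧ u.length = p := by
    rintro p hp l ⟨⟨u, v⟩, ⟨⟨hu, hul⟩, ⟨hv, hvl⟩⟩, rfl⟩
    have hmem := ((char M u v).mpr ⟨hu, hv⟩)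
    refine ⟨hmem.1, ?_, List.mem_append_right _ (List.mem_cons_self),
      u, v, rfl, hmem.2, hul⟩
    rw [Finset.mem_range] at hp
    simp only [List.length_append, List.length_cons, hul, hvl]
    omega
  have hsplit : {l ∈ JL (M + 1) | l.length = n + 1} =
      {l ∈ JL M | l.length = n + 1} ∪ ⋃ p ∈ Finset.range (n + 1), G p := by
    ext l
    constructor
    · rintro ⟨hl, hlen⟩
      by_cases hin : (M + 1) ∈ l
      · right
        obtain ⟨u, v, rfl, hnu⟩ := split_exists hin
        obtain ⟨hu, hv⟩ := (char M u v).mp ⟨hl, hnu⟩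
        rw [Set.mem_iUnion₂]
        refine ⟨u.length, ?_, ⟨(u, v), ⟨⟨hu, rfl⟩, hv, ?_⟩, rfl⟩⟩
        · rw [Finset.mem_range]
          simp only [List.length_append, List.length_cons] at hlen
          omega
        · show v.length = n - u.length
          simp only [List.length_append, List.length_cons] at hlen
          omega
      · left
        refine ⟨⟨fun x hx => ?_, hl.2⟩, hlen⟩
        have h1 := hl.1 x hx
        have : x ≠ M + 1 := fun hc => hin (hc ▸ hx)
        exact ⟨h1.1, by omega⟩
    · rintro (⟨hl, hlen⟩ | hl)
      · refine ⟨⟨fun x hx => ?_, hl.2⟩, hlen⟩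
        have := hl.1 x hx; omega
      · rw [Set.mem_iUnion₂] at hl
        obtain ⟨p, hp, hlp⟩ := hl
        obtain ⟨h1, h2, _⟩ := memG p hp l hlp
        exact ⟨h1, h2⟩
  have hfinG : ∀ p ∈ Finset.range (n + 1), (G p).Finite := by
    intro p hp
    exact (((finite_sec (HB_sub M)).prod (finite_sec (KL_sub (M + 1)))).image _)
  have hdisjG : ∀ p ∈ Finset.range (n + 1), ∀ q ∈ Finset.range (n + 1),
      p ≠ q → Disjoint (G p) (G q) := by
    intro p hp q hq hpq
    rw [Set.disjoint_left]
    intro l hlp hlq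
    obtain ⟨_, _, _, u₁, v₁, rfl, hnu₁, hl₁⟩ := memG p hp l hlp
    obtain ⟨_, _, _, u₂, v₂, heq, hnu₂, hl₂⟩ := memG q hq _ hlq
    obtain ⟨rfl, -⟩ := split_unique heq hnu₁ hnu₂
    exact hpq (hl₁ ▸ hl₂ ▸ rfl)
  have hGcard : ∀ p ∈ Finset.range (n + 1),
      (G p).ncard = cnt (HB M) p * cnt (KL (M + 1)) (n - p) := by
    intro p hp
    rw [hG]
    rw [Set.ncard_image_of_injOn, my_ncard_prod]
    · rfl
    · rintro ⟨u₁, v₁⟩ ⟨⟨hu₁, _⟩, _⟩ ⟨u₂, v₂⟩ ⟨⟨hu₂, _⟩, _⟩ heq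
      obtain ⟨rfl, rfl⟩ := split_unique heq (HB_notin hu₁) (HB_notin hu₂)
      rfl
  have hdisjL : Disjoint {l ∈ JL M | l.length = n + 1} (⋃ p ∈ Finset.range (n + 1), G p) := by
    rw [Set.disjoint_left]
    intro l hl hl2
    rw [Set.mem_iUnion₂] at hl2
    obtain ⟨p, hp, hlp⟩ := hl2
    obtain ⟨-, -, hin, -⟩ := memG p hp l hlp
    have := hl.1.1 _ hin
    omega
  rw [cnt, hsplit, Set.ncard_union_eq hdisjL (finite_sec (le_refl _))
    (Set.Finite.biUnion (Finset.range (n + 1)).finite_toSet hfinG),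
    my_ncard_biUnion _ _ hfinG hdisjG]
  congr 1
  exact Finset.sum_congr rfl hGcard



lemma fun_set_eq (m n : ℕ) :
    {l ∈ JL m | l.length = n} = List.ofFn ''
      {w : Fin n → ℕ | (∀ i, 1 ≤ w i ∧ w i ≤ m) ∧
        ∀ i : ℕ, ∀ h : i + 1 < n,
          w ⟨i + 1, h⟩ ≤ w ⟨i, by omega⟩ + 1 ∧ w ⟨i + 1, h⟩ ≠ w ⟨i, by omega⟩} := by
  ext l
  constructor
  · rintro ⟨⟨hmem, hch⟩, hlen⟩
    subst hlen
    refine ⟨l.get, ⟨fun i => hmem _ (l.get_mem _), ?_⟩, List.ofFn_get l⟩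
    intro i h
    have := List.isChain_iff_getElem.mp hch i (by omega)
    exact ⟨this.1, this.2⟩
  · rintro ⟨w, ⟨hmem, hch⟩, rfl⟩
    refine ⟨⟨?_, ?_⟩, List.length_ofFn⟩
    · intro x hx
      rw [List.mem_ofFn] at hx
      obtain ⟨i, rfl⟩ := hx
      exact hmem i
    · simp only [List.Chain', List.isChain_ofFn]
      intro i hi
      exact ⟨(hch i hi).1, (hch i hi).2⟩

lemma J_eq (m : ℕ) : J m = PowerSeries.mk fun n => (cnt (JL m) n : ℤ) := by
  apply PowerSeries.ext
  intro n
  unfold J cnt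
  rw [PowerSeries.coeff_mk, PowerSeries.coeff_mk, fun_set_eq,
    Set.ncard_image_of_injOn List.ofFn_injective.injOn]

lemma H_set_eq (m n : ℕ) (hn : 0 < n) :
    {l ∈ HB m | l.length = n} = List.ofFn ''
      {w : Fin n → ℕ | (∀ i, 1 ≤ w i ∧ w i ≤ m) ∧
        (∀ i : ℕ, ∀ h : i + 1 < n,
          w ⟨i + 1, h⟩ ≤ w ⟨i, by omega⟩ + 1 ∧ w ⟨i + 1, h⟩ ≠ w ⟨i, by omega⟩) ∧
        ∃ h : 0 < n, w ⟨n - 1, by omega⟩ = m} := by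
  ext l
  constructor
  · rintro ⟨⟨⟨hmem, hch⟩, hlast⟩, hlen⟩
    subst hlen
    have hne : l ≠ [] := by
      intro hc; rw [hc] at hn; simp at hn
    rcases hlast with rfl | hlast
    · exact absurd rfl hne
    refine ⟨l.get, ⟨fun i => hmem _ (l.get_mem _), fun i h => ?_, hn, ?_⟩,
      List.ofFn_get l⟩
    · have := List.isChain_iff_getElem.mp hch i (by omega)
      exact ⟨this.1, this.2⟩
    · rw [List.getLast?_eq_getLast_of_ne_nil hne, Option.some.injEq,
        List.getLast_eq_getElem] at hlast
      exact hlast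
  · rintro ⟨w, ⟨hmem, hch, _, hlast⟩, rfl⟩
    have hne : List.ofFn w ≠ [] := by
      intro hc
      have := congrArg List.length hc
      rw [List.length_ofFn] at this
      simp at this
      omega
    refine ⟨⟨⟨?_, ?_⟩, Or.inr ?_⟩, List.length_ofFn⟩
    · intro x hx
      rw [List.mem_ofFn] at hx
      obtain ⟨i, rfl⟩ := hx
      exact hmem i
    · simp only [List.Chain', List.isChain_ofFn]
      intro i hi
      exact ⟨(hch i hi).1, (hch i hi).2⟩
    · rw [List.getLast?_eq_getLast_of_ne_nil hne, Option.some.injEq,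
        List.getLast_eq_getElem, List.getElem_ofFn]
      rw [← hlast]
      congr 1
      apply Fin.ext
      simp [List.length_ofFn]
  
lemma HB_eq (m : ℕ) : (1 : PowerSeries ℤ) + H m =
    PowerSeries.mk fun n => (cnt (HB m) n : ℤ) := by
  apply PowerSeries.ext
  intro n
  rw [map_add, PowerSeries.coeff_mk]
  unfold H
  rw [PowerSeries.coeff_mk]
  cases n with
  | zero =>
    rw [cnt_zero (nil_mem_HB m)]
    have : {w : Fin 0 → ℕ |
      (∀ i, 1 ≤ w i ∧ w i ≤ m) ∧
      (∀ i : ℕ, ∀ h : i + 1 < 0,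
        w ⟨i + 1, h⟩ ≤ w ⟨i, by omega⟩ + 1 ∧ w ⟨i + 1, h⟩ ≠ w ⟨i, by omega⟩) ∧
      ∃ h : 0 < 0, w ⟨0 - 1, by omega⟩ = m} = ∅ := by
      ext w
      simp only [Set.mem_setOf_eq, Set.mem_empty_iff_false, iff_false]
      rintro ⟨-, -, h, -⟩
      omega
    rw [this, Set.ncard_empty]
    simp
  | succ k =>
    have h1 : (PowerSeries.coeff (k + 1)) (1 : PowerSeries ℤ) = 0 := by
      rw [PowerSeries.coeff_one]
      simp
    rw [h1, zero_add, cnt, H_set_eq m (k + 1) (Nat.succ_pos k),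
      Set.ncard_image_of_injOn List.ofFn_injective.injOn]

lemma N1 (m : ℕ) (hm : 1 ≤ m) (n : ℕ) :
    cnt (JL m) (n + 1) = cnt (KL m) (n + 1) + cnt (KL m) n := by
  unfold cnt
  rw [JL_sec_split m hm n,
    Set.ncard_union_eq ?_ (finite_sec (KL_sub m)) ((finite_sec (KL_sub m)).image _),
    Set.ncard_image_of_injOn (fun l1 _ l2 _ h => by simpa using h)]
  rw [Set.disjoint_left]
  rintro l ⟨⟨_, hh⟩, _⟩ ⟨t, _, rfl⟩
  exact hh rfl

lemma L1 (m : ℕ) (hm : 1 ≤ m) :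
    (PowerSeries.mk fun n => (cnt (JL m) n : ℤ)) =
      (1 + PowerSeries.X) * PowerSeries.mk fun n => (cnt (KL m) n : ℤ) := by
  apply PowerSeries.ext
  intro n
  rw [add_mul, one_mul, map_add, PowerSeries.coeff_mk]
  cases n with
  | zero =>
    rw [mul_comm, PowerSeries.coeff_zero_mul_X, add_zero, PowerSeries.coeff_mk,
      cnt_zero (nil_mem_JL m), cnt_zero (nil_mem_KL m)]
  | succ k =>
    rw [PowerSeries.coeff_succ_X_mul, PowerSeries.coeff_mk, PowerSeries.coeff_mk]
    exact_mod_cast N1 m hm k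

lemma L2 (m : ℕ) (hm : 1 ≤ m) :
    (PowerSeries.mk fun n => (cnt (JL m) n : ℤ)) =
      (PowerSeries.mk fun n => (cnt (JL (m - 1)) n : ℤ)) +
        PowerSeries.X * (PowerSeries.mk fun n => (cnt (HB (m - 1)) n : ℤ)) *
          (PowerSeries.mk fun n => (cnt (KL m) n : ℤ)) := by
  obtain ⟨M, rfl⟩ : ∃ M, m = M + 1 := ⟨m - 1, (Nat.succ_pred_eq_of_pos hm).symm⟩
  simp only [Nat.add_sub_cancel]
  apply PowerSeries.ext
  intro n
  rw [map_add, PowerSeries.coeff_mk, PowerSeries.coeff_mk, mul_assoc]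
  cases n with
  | zero =>
    rw [PowerSeries.coeff_zero_eq_constantCoeff_apply, map_mul,
      PowerSeries.constantCoeff_X, zero_mul, add_zero,
      cnt_zero (nil_mem_JL (M + 1)), cnt_zero (nil_mem_JL M)]
  | succ k =>
    rw [PowerSeries.coeff_succ_X_mul, PowerSeries.coeff_mul]
    simp only [PowerSeries.coeff_mk]
    rw [Finset.Nat.sum_antidiagonal_eq_sum_range_succ_mk]
    rw [N2 M k]
    push_cast
    ring

end JRecAux

theorem J_recurrence (m : ℕ) (hm : 1 ≤ m) :
    (1 + PowerSeries.X) * J m =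
      (1 + PowerSeries.X) * J (m - 1) + PowerSeries.X * (1 + H (m - 1)) * J m := by
  rw [JRecAux.HB_eq (m - 1), JRecAux.J_eq m, JRecAux.J_eq (m - 1)]
  conv_lhs => rw [JRecAux.L2 m hm]
  conv_rhs => rw [JRecAux.L1 m hm]
  ring
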